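/- Every ordered abelian group that is o-minimal (as an ordered structure where every definable subset of M is a finite union of points and open intervals) is torsion-free and divisible; in particular, for every pair m, m' ∈ M there exists a unique y with y + y = m + m'. -/

import Mathlib

/-- Function symbols of the language of ordered groups: `0` and `+`. -/
inductive GrpFunc : ℕ → Type
  | zero : GrpFunc 0
  | add : GrpFunc 2

/-- Relation symbols: `<`. -/
inductive GrpRel : ℕ → Type
  | lt : GrpRel 2

/-- The first-order language `⟨+, 0, <⟩` of ordered groups. -/
def ordGrpLang : FirstOrder.Language := ⟨GrpFunc, GrpRel⟩

/-- The canonical `⟨+, 0, <⟩`-structure on an ordered abelian group. -/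
noncomputable instance ordGrpStructure (M : Type*) [AddCommGroup M] [LinearOrder M] [IsOrderedAddMonoid M] :
    ordGrpLang.Structure M where
  funMap {n} f x :=
    match n, f, x with
    | _, GrpFunc.zero, _ => 0
    | _, GrpFunc.add, x => x 0 + x 1
  RelMap {n} r x :=
    match n, r, x with
    | _, GrpRel.lt, x => x 0 < x 1

/-- `s ⊆ M` is a point or an open interval (possibly unbounded). -/
def IsPtOrOpenInterval {M : Type*} [LinearOrder M] (s : Set M) : Prop :=
  (∃ a, s = {a}) ∨ (∃ a b, s = Set.Ioo a b) ∨ (∃ a, s = Set.Ioi a) ∨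
    (∃ a, s = Set.Iio a) ∨ s = Set.univ

open FirstOrder Language

/-- The term `t + s` in the language of ordered groups. -/
def addT {β : Type*} (t s : ordGrpLang.Term β) : ordGrpLang.Term β :=
  Term.func GrpFunc.add ![t, s]

/-- A point-or-interval is either eventually everything or bounded above. -/
lemma IsPtOrOpenInterval.ioi_or_bdd {M : Type*} [AddCommGroup M] [LinearOrder M] [IsOrderedAddMonoid M] {s : Set M}
    (h : IsPtOrOpenInterval s) :
    (∃ a, Set.Ioi a ⊆ s) ∨ (∃ b, ∀ x ∈ s, x ≤ b) := by
  rcases h with ⟨a, rfl⟩ | ⟨a, b, rfl⟩ | ⟨a, rfl⟩ | ⟨a, rfl⟩ | rfl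
  · exact Or.inr ⟨a, fun x hx => le_of_eq hx⟩
  · exact Or.inr ⟨b, fun x hx => le_of_lt hx.2⟩
  · exact Or.inl ⟨a, le_refl _⟩
  · exact Or.inr ⟨a, fun x hx => le_of_lt hx⟩
  · exact Or.inl ⟨0, fun x _ => Set.mem_univ x⟩

/-- A finite union of points/intervals that is unbounded above contains a final segment. -/
lemma unbdd_contains_ioi {M : Type*} [AddCommGroup M] [LinearOrder M] [IsOrderedAddMonoid M] {s : Set M}
    {n : ℕ} {f : Fin n → Set M} (hf : ∀ i, IsPtOrOpenInterval (f i)) (hs : s = ⋃ i, f i)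
    (hub : ∀ a : M, ∃ x ∈ s, a < x) : ∃ a, Set.Ioi a ⊆ s := by
  by_cases hex : ∃ i, ∃ a, Set.Ioi a ⊆ f i
  · obtain ⟨i, a, ha⟩ := hex
    exact ⟨a, ha.trans (hs ▸ Set.subset_iUnion f i)⟩
  · push_neg at hex
    -- every piece is bounded above
    have hbdd : ∀ i, ∃ b, ∀ x ∈ f i, x ≤ b := by
      intro i
      rcases (hf i).ioi_or_bdd with ⟨a, ha⟩ | hb
      · exact absurd ha (by simpa using hex i a)
      · exact hb
    choose g hg using hbdd
    rcases Nat.eq_zero_or_pos n with rfl | hn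
    · obtain ⟨x, hx, _⟩ := hub 0
      rw [hs] at hx
      simp at hx
    · haveI : Nonempty (Fin n) := ⟨⟨0, hn⟩⟩
      set B := Finset.univ.sup' Finset.univ_nonempty g with hB
      obtain ⟨x, hx, hBx⟩ := hub B
      rw [hs] at hx
      obtain ⟨t, ⟨i, rfl⟩, hxt⟩ := hx
      have : x ≤ B := le_trans (hg i x hxt) (Finset.le_sup' g (Finset.mem_univ i))
      exact absurd hBx (not_lt.mpr this)

/-- Key lemma: halves exist. -/
lemma half_exists {M : Type*} [AddCommGroup M] [LinearOrder M] [IsOrderedAddMonoid M]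
    (homin : ∀ s : Set M,
      Set.Definable (Set.univ : Set M) ordGrpLang {x : Fin 1 → M | x 0 ∈ s} →
      ∃ (n : ℕ) (f : Fin n → Set M), (∀ i, IsPtOrOpenInterval (f i)) ∧ s = ⋃ i, f i)
    (c : M) : ∃ y : M, y + y = c := by
  by_contra hno
  push_neg at hno
  -- M is nontrivial: otherwise c = 0 and y = 0 works
  have hnt : ∃ e : M, 0 < e := by
    by_contra he
    push_neg at he
    have h0 : ∀ x : M, x = 0 := by
      intro x
      rcases lt_trichotomy x 0 with h | h | h
      · exact absurd (neg_pos.mpr h) (not_lt.mpr (he _))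
      · exact h
      · exact absurd h (not_lt.mpr (he _))
    exact hno 0 (by rw [h0 c, add_zero])
  obtain ⟨e, he⟩ := hnt
  set D : Set M := {m : M | ∃ y, y + y = m} with hD
  set Dc : Set M := {m : M | ∃ y, y + y + c = m} with hDc
  -- D and Dc are disjoint
  have hdisj : ∀ x, x ∈ D → x ∈ Dc → False := by
    rintro x ⟨y, hy⟩ ⟨z, hz⟩
    apply hno (y - z)
    have hc : y + y = z + z + c := by rw [hy, hz]
    rw [sub_add_sub_comm, hc, add_sub_cancel_left]
  -- D is definable
  have hDdef : Set.Definable (Set.univ : Set M) ordGrpLang {x : Fin 1 → M | x 0 ∈ D} := by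
    rw [Set.definable_iff_exists_formula_sum]
    refine ⟨BoundedFormula.ex
      (Term.bdEqual (addT (Term.var (Sum.inr 0)) (Term.var (Sum.inr 0)))
        (Term.var (Sum.inl (Sum.inr 0)))), ?_⟩
    ext v
    simp [addT, BoundedFormula.realize_ex, BoundedFormula.realize_bdEqual, Term.realize,
      Formula.Realize, ordGrpStructure, Fin.snoc, hD]
    exact Iff.rfl
  -- Dc is definable (with parameter c)
  have hDcdef : Set.Definable (Set.univ : Set M) ordGrpLang {x : Fin 1 → M | x 0 ∈ Dc} := by
    rw [Set.definable_iff_exists_formula_sum]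
    refine ⟨BoundedFormula.ex
      (Term.bdEqual
        (addT (addT (Term.var (Sum.inr 0)) (Term.var (Sum.inr 0)))
          (Term.var (Sum.inl (Sum.inl ⟨c, Set.mem_univ c⟩))))
        (Term.var (Sum.inl (Sum.inr 0)))), ?_⟩
    ext v
    simp [addT, BoundedFormula.realize_ex, BoundedFormula.realize_bdEqual, Term.realize,
      Formula.Realize, ordGrpStructure, Fin.snoc, hDc]
    exact Iff.rfl
  obtain ⟨n, f, hf, hfs⟩ := homin D hDdef
  obtain ⟨n', f', hf', hfs'⟩ := homin Dc hDcdef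
  -- D is unbounded above
  have hDu : ∀ a : M, ∃ x ∈ D, a < x := by
    intro a
    refine ⟨(max a 0 + e) + (max a 0 + e), ⟨_, rfl⟩, ?_⟩
    have h1 : a < max a 0 + e := lt_of_le_of_lt (le_max_left a 0) (lt_add_of_pos_right _ he)
    have h2 : 0 < max a 0 + e := add_pos_of_nonneg_of_pos (le_max_right a 0) he
    exact h1.trans (lt_add_of_pos_left _ h2)
  -- Dc is unbounded above
  have hDcu : ∀ a : M, ∃ x ∈ Dc, a < x := by
    intro a
    refine ⟨(max (a - c) 0 + e) + (max (a - c) 0 + e) + c, ⟨_, rfl⟩, ?_⟩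
    have h1 : a - c < max (a - c) 0 + e :=
      lt_of_le_of_lt (le_max_left _ 0) (lt_add_of_pos_right _ he)
    have h2 : 0 < max (a - c) 0 + e := add_pos_of_nonneg_of_pos (le_max_right _ 0) he
    exact sub_lt_iff_lt_add.mp (h1.trans (lt_add_of_pos_left _ h2))
  obtain ⟨a, ha⟩ := unbdd_contains_ioi hf hfs hDu
  obtain ⟨a', ha'⟩ := unbdd_contains_ioi hf' hfs' hDcu
  set x := max a a' + e with hx
  have hxa : a < x := lt_of_le_of_lt (le_max_left a a') (lt_add_of_pos_right _ he)
  have hxa' : a' < x := lt_of_le_of_lt (le_max_right a a') (lt_add_of_pos_right _ he)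
  exact hdisj x (ha hxa) (ha' hxa')

/-- every o-minimal ordered abelian group (every subset of `M` definable
with parameters is a finite union of points and open intervals) is torsion-free and
divisible; in particular for all `m, m'` there is a unique `y` with `y + y = m + m'`. -/
theorem omin_ordered_group_divisible_torsionfree
    (M : Type*) [AddCommGroup M] [LinearOrder M] [IsOrderedAddMonoid M]
    (homin : ∀ s : Set M,
      Set.Definable (Set.univ : Set M) ordGrpLang {x : Fin 1 → M | x 0 ∈ s} →
      ∃ (n : ℕ) (f : Fin n → Set M), (∀ i, IsPtOrOpenInterval (f i)) ∧ s = ⋃ i, f i) :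
    (∀ (x : M) (n : ℕ), n ≠ 0 → n • x = 0 → x = 0) ∧
    (∀ m m' : M, ∃! y : M, y + y = m + m') := by
  constructor
  · intro x n hn hnx
    rcases lt_trichotomy x 0 with h | h | h
    · have : (0 : M) < n • (-x) := nsmul_pos (neg_pos.mpr h) hn
      rw [smul_neg, hnx, neg_zero] at this
      exact absurd this (lt_irrefl 0)
    · exact h
    · have : (0 : M) < n • x := nsmul_pos h hn
      rw [hnx] at this
      exact absurd this (lt_irrefl 0)
  · intro m m'
    obtain ⟨y, hy⟩ := half_exists homin (m + m')
    refine ⟨y, hy, fun z hz => ?_⟩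
    have hz' : z + z = m + m' := hz
    rcases lt_trichotomy z y with h | h | h
    · exact absurd (hz' ▸ hy ▸ add_lt_add h h) (lt_irrefl _)
    · exact h
    · exact absurd (hy ▸ hz' ▸ add_lt_add h h) (lt_irrefl _)
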